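/- Let c ∈ (0, 1/6.1] and let h : [0,T) → ℝ be the maximal solution of h'(x) = (1.6c/(1-x²)) h(x) + 4.5c/(1-x²)² + h(x)², h(0) = 0, with T ≤ 1. Then T = 1 and h(x) ≤ x/(1-x²) for all x ∈ [0,1). -/

import Mathlib

open Set
open scoped NNReal

private theorem picard_sol {v : ℝ → ℝ → ℝ} {tMin tMax : ℝ} {t₀ : Icc tMin tMax} {x₀ : ℝ}
    {a L K : ℝ≥0} (hf : IsPicardLindelof v t₀ x₀ a 0 L K) :
    ∃ f : ℝ → ℝ, f t₀ = x₀ ∧ ∀ t ∈ Icc tMin tMax,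
      HasDerivWithinAt f (v t (f t)) (Icc tMin tMax) t ∧
        f t ∈ Metric.closedBall x₀ a := by
  have hx : x₀ ∈ Metric.closedBall x₀ (0 : ℝ≥0) := Metric.mem_closedBall_self le_rfl
  obtain ⟨α, hα⟩ := ODE.FunSpace.exists_isFixedPt_next hf hx
  refine ⟨α.compProj, by rw [ODE.FunSpace.compProj_val, ← hα, ODE.FunSpace.next_apply₀],
    fun t ht ↦ ⟨?_, α.compProj_mem_closedBall hf.mul_max_le⟩⟩
  apply ODE.hasDerivWithinAt_picard_Icc t₀.2 hf.continuousOn_uncurry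
    α.continuous_compProj.continuousOn (fun _ ht' ↦ α.compProj_mem_closedBall hf.mul_max_le)
    x₀ ht |>.congr_of_mem _ ht
  intro t' ht'
  nth_rw 1 [← hα]
  rw [ODE.FunSpace.compProj_of_mem ht', ODE.FunSpace.next_apply]

private theorem picard_sol' (v : ℝ → ℝ → ℝ) (tMin tMax t₀ : ℝ)
    (ht : t₀ ∈ Icc tMin tMax) (x₀ : ℝ) (C R L : ℝ) (hC : 0 ≤ C) (hR : 0 ≤ R)
    (hpl : IsPicardLindelof v (⟨t₀, ht⟩ : Icc tMin tMax) x₀ (Real.toNNReal R) 0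
      (Real.toNNReal C) (Real.toNNReal L)) :
    ∃ f : ℝ → ℝ, f t₀ = x₀ ∧ ∀ t ∈ Icc tMin tMax,
      HasDerivWithinAt f (v t (f t)) (Icc tMin tMax) t ∧
        f t ∈ Icc (x₀ - R) (x₀ + R) := by
  obtain ⟨f, hf0, hf⟩ := picard_sol hpl
  refine ⟨f, hf0, fun t htt => ⟨(hf t htt).1, ?_⟩⟩
  have := (hf t htt).2
  rw [Real.coe_toNNReal _ hR, Real.closedBall_eq_Icc] at this
  exact this

private noncomputable def pt (T₁ t : ℝ) : ℝ := max 0 (min t T₁)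

private noncomputable def vv (c T₁ t y : ℝ) : ℝ :=
  1.6 * c / (1 - pt T₁ t ^ 2) * y + 4.5 * c / (1 - pt T₁ t ^ 2) ^ 2 + y ^ 2

private lemma pt_mem (T₁ t : ℝ) (hT₁ : 0 ≤ T₁) : 0 ≤ pt T₁ t ∧ pt T₁ t ≤ T₁ :=
  ⟨le_max_left _ _, max_le hT₁ (min_le_right _ _)⟩

private lemma pt_eq (T₁ t : ℝ) (h0 : 0 ≤ t) (h1 : t ≤ T₁) : pt T₁ t = t := by
  rw [pt, min_eq_left h1, max_eq_right h0]

private lemma vv_eq (c T₁ t : ℝ) (h0 : 0 ≤ t) (h1 : t ≤ T₁) (y : ℝ) :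
    vv c T₁ t y = 1.6 * c / (1 - t ^ 2) * y + 4.5 * c / (1 - t ^ 2) ^ 2 + y ^ 2 := by
  rw [vv, pt_eq T₁ t h0 h1]

private lemma vv_ed {T₁ d : ℝ} (hT₁ : 0 ≤ T₁) (hdef : d = 1 - T₁ ^ 2) (t : ℝ) :
    d ≤ 1 - pt T₁ t ^ 2 := by
  obtain ⟨h1, h2⟩ := pt_mem T₁ t hT₁
  nlinarith

private lemma vv_lip {c T₁ d M : ℝ} (hc0 : 0 ≤ c) (hc1 : c ≤ 1) (hd : 0 < d)
    (hT₁ : 0 ≤ T₁) (hdef : d = 1 - T₁ ^ 2) (hM : 1 ≤ M) (t : ℝ) :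
    LipschitzOnWith (Real.toNNReal (2 / d + 2 * M)) (vv c T₁ t) (Icc (-1 : ℝ) M) := by
  rw [lipschitzOnWith_iff_dist_le_mul]
  intro y hy z hz
  rw [Real.dist_eq, Real.dist_eq, Real.coe_toNNReal _ (by positivity)]
  have hed := vv_ed hT₁ hdef t
  have he0 : 0 < 1 - pt T₁ t ^ 2 := lt_of_lt_of_le hd hed
  have hfac : vv c T₁ t y - vv c T₁ t z
      = (1.6 * c / (1 - pt T₁ t ^ 2) + (y + z)) * (y - z) := by
    simp only [vv]; ring
  rw [hfac, abs_mul]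
  have ha0 : 0 ≤ 1.6 * c / (1 - pt T₁ t ^ 2) := by positivity
  have ha : 1.6 * c / (1 - pt T₁ t ^ 2) ≤ 2 / d :=
    div_le_div₀ (by norm_num) (by linarith) hd hed
  have h2d : 0 ≤ 2 / d := by positivity
  have habs : |1.6 * c / (1 - pt T₁ t ^ 2) + (y + z)| ≤ 2 / d + 2 * M := by
    rw [abs_le]
    refine ⟨by nlinarith [hy.1, hz.1], by nlinarith [hy.2, hz.2]⟩
  exact mul_le_mul_of_nonneg_right habs (abs_nonneg _)

private lemma vv_bound {c T₁ d M : ℝ} (hc0 : 0 ≤ c) (hc1 : c ≤ 1) (hd : 0 < d)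
    (hT₁ : 0 ≤ T₁) (hdef : d = 1 - T₁ ^ 2) (hM : 1 ≤ M) (t y : ℝ)
    (hy : y ∈ Icc (-1 : ℝ) M) :
    |vv c T₁ t y| ≤ 2 / d * M + 5 / d ^ 2 + M ^ 2 := by
  have hed := vv_ed hT₁ hdef t
  have he0 : 0 < 1 - pt T₁ t ^ 2 := lt_of_lt_of_le hd hed
  have hyabs : |y| ≤ M := abs_le.mpr ⟨by linarith [hy.1], hy.2⟩
  have h1 : |1.6 * c / (1 - pt T₁ t ^ 2) * y| ≤ 2 / d * M := by
    rw [abs_mul, abs_of_nonneg (by positivity : (0:ℝ) ≤ 1.6 * c / (1 - pt T₁ t ^ 2))]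
    exact mul_le_mul (div_le_div₀ (by norm_num) (by linarith) hd hed) hyabs
      (abs_nonneg _) (by positivity)
  have h2 : |4.5 * c / (1 - pt T₁ t ^ 2) ^ 2| ≤ 5 / d ^ 2 := by
    rw [abs_of_nonneg (by positivity)]
    exact div_le_div₀ (by norm_num) (by linarith) (by positivity)
      (pow_le_pow_left₀ hd.le hed 2)
  have h3 : |y ^ 2| ≤ M ^ 2 := by
    rw [abs_of_nonneg (sq_nonneg y), ← sq_abs]
    exact pow_le_pow_left₀ (abs_nonneg _) hyabs 2
  calc |vv c T₁ t y| ≤ |1.6 * c / (1 - pt T₁ t ^ 2) * y|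
        + |4.5 * c / (1 - pt T₁ t ^ 2) ^ 2| + |y ^ 2| := abs_add_three _ _ _
    _ ≤ 2 / d * M + 5 / d ^ 2 + M ^ 2 := by linarith

set_option maxHeartbeats 4000000 in
theorem stmt_9 (c : ℝ) (hc : 0 < c) (hc' : 6.1 * c ≤ 1)
    (T : ℝ) (hT0 : 0 < T) (hT1 : T ≤ 1)
    (h : ℝ → ℝ) (h0 : h 0 = 0)
    (hode : ∀ x ∈ Set.Ico (0 : ℝ) T,
      HasDerivAt h
        ((1.6 * c / (1 - x ^ 2)) * h x + 4.5 * c / (1 - x ^ 2) ^ 2 + h x ^ 2) x)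
    -- maximality: any solution on a larger subinterval of [0,1) extending h forces equality of intervals
    (hmax : ∀ (T' : ℝ) (g : ℝ → ℝ), T ≤ T' → T' ≤ 1 → g 0 = 0 →
      (∀ x ∈ Set.Ico (0 : ℝ) T',
        HasDerivAt g
          ((1.6 * c / (1 - x ^ 2)) * g x + 4.5 * c / (1 - x ^ 2) ^ 2 + g x ^ 2) x) →
      (∀ x ∈ Set.Ico (0 : ℝ) T, g x = h x) → T' = T) :
    T = 1 ∧ ∀ x ∈ Set.Ico (0 : ℝ) 1, h x ≤ x / (1 - x ^ 2) := by
  have hc1 : c ≤ 1 := by linarith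
  -- derivative of the barrier
  have hder : ∀ x : ℝ, x ^ 2 < 1 →
      HasDerivAt (fun y => y / (1 - y ^ 2)) ((1 + x ^ 2) / (1 - x ^ 2) ^ 2) x := by
    intro x hx
    have hne : 1 - x ^ 2 ≠ 0 := by nlinarith
    have := (hasDerivAt_id x).fun_div (((hasDerivAt_pow 2 x).const_sub 1)) hne
    refine this.congr_deriv ?_
    simp only [id_eq]
    ring
  -- upper bound on [0, T)
  have hub : ∀ x ∈ Ico (0:ℝ) T, h x ≤ x / (1 - x ^ 2) := by
    intro b hb
    have hbT : b < T := hb.2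
    have hb1 : b < 1 := lt_of_lt_of_le hbT hT1
    have key := image_le_of_deriv_right_lt_deriv_boundary'
      (f := h)
      (f' := fun x => 1.6 * c / (1 - x ^ 2) * h x + 4.5 * c / (1 - x ^ 2) ^ 2 + h x ^ 2)
      (a := 0) (b := b)
      (B := fun x => x / (1 - x ^ 2)) (B' := fun x => (1 + x ^ 2) / (1 - x ^ 2) ^ 2)
      (fun x hx => (hode x ⟨hx.1, lt_of_le_of_lt hx.2 hbT⟩).continuousAt.continuousWithinAt)
      (fun x hx => (hode x ⟨hx.1, lt_trans hx.2 hbT⟩).hasDerivWithinAt)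
      (by norm_num [h0])
      (fun x hx => by
        have hx1 : x ^ 2 < 1 := by nlinarith [hx.1, hx.2]
        exact (hder x hx1).continuousAt.continuousWithinAt)
      (fun x hx => by
        have hx1 : x ^ 2 < 1 := by nlinarith [hx.1, hx.2.le]
        exact (hder x hx1).hasDerivWithinAt)
      (fun x hx hxeq => by
        have hx1 : x < 1 := lt_of_lt_of_le (lt_of_lt_of_le hx.2 hbT.le) hT1
        have he : 0 < 1 - x ^ 2 := by nlinarith [hx.1]
        rw [hxeq]
        have key2 : 1.6 * c * x + 4.5 * c + x ^ 2 < 1 + x ^ 2 := by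
          nlinarith [mul_pos hc (sub_pos.2 hx1)]
        calc 1.6 * c / (1 - x ^ 2) * (x / (1 - x ^ 2)) + 4.5 * c / (1 - x ^ 2) ^ 2
              + (x / (1 - x ^ 2)) ^ 2
            = (1.6 * c * x + 4.5 * c + x ^ 2) / (1 - x ^ 2) ^ 2 := by
              field_simp
          _ < (1 + x ^ 2) / (1 - x ^ 2) ^ 2 := by gcongr)
    exact key ⟨hb.1, le_rfl⟩
  -- lower bound on [0, T)
  have hlb : ∀ x ∈ Ico (0:ℝ) T, 0 ≤ h x := by
    intro b hb
    have hbT : b < T := hb.2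
    have key := image_le_of_deriv_right_lt_deriv_boundary'
      (f := fun x => -h x)
      (f' := fun x => -(1.6 * c / (1 - x ^ 2) * h x + 4.5 * c / (1 - x ^ 2) ^ 2 + h x ^ 2))
      (a := 0) (b := b)
      (B := fun _ => (0:ℝ)) (B' := fun _ => (0:ℝ))
      (fun x hx =>
        ((hode x ⟨hx.1, lt_of_le_of_lt hx.2 hbT⟩).continuousAt.neg).continuousWithinAt)
      (fun x hx => (hode x ⟨hx.1, lt_trans hx.2 hbT⟩).neg.hasDerivWithinAt)
      (by norm_num [h0])
      continuousOn_const
      (fun x hx => (hasDerivAt_const x (0:ℝ)).hasDerivWithinAt)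
      (fun x hx hxeq => by
        have hx1 : x < 1 := lt_of_lt_of_le (lt_of_lt_of_le hx.2 hbT.le) hT1
        have he : 0 < 1 - x ^ 2 := by nlinarith [hx.1]
        have hhx : h x = 0 := by simpa [neg_eq_zero] using hxeq
        rw [hhx]
        simp only [mul_zero, add_zero, neg_lt, neg_zero]
        positivity)
    have := key ⟨hb.1, le_rfl⟩
    simpa using this
  -- main part : T = 1
  have hT : T = 1 := by
    by_contra hne
    have hTlt : T < 1 := lt_of_le_of_ne hT1 hne
    set T₁ : ℝ := (T + 1) / 2 with hT₁def
    have hTT₁ : T < T₁ := by rw [hT₁def]; linarith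
    have hT₁1 : T₁ < 1 := by rw [hT₁def]; linarith
    have hT₁0 : 0 < T₁ := by rw [hT₁def]; linarith
    set d : ℝ := 1 - T₁ ^ 2 with hddef
    have hd : 0 < d := by rw [hddef]; nlinarith
    set M0 : ℝ := T / (1 - T ^ 2) with hM0def
    have hT2 : 0 < 1 - T ^ 2 := by nlinarith
    have hM00 : 0 ≤ M0 := by rw [hM0def]; positivity
    set M : ℝ := M0 + 1 with hMdef
    have hM1 : 1 ≤ M := by rw [hMdef]; linarith
    set L : ℝ := 2 / d + 2 * M with hLdef
    set C : ℝ := 2 / d * M + 5 / d ^ 2 + M ^ 2 with hCdef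
    have hC0 : 0 < C := by
      rw [hCdef]
      have : 0 < 5 / d ^ 2 := by positivity
      have : 0 ≤ 2 / d * M := by positivity
      nlinarith [sq_nonneg M]
    set r : ℝ := min T (min (1 - T) (1 / C)) with hrdef
    have hr0 : 0 < r := by
      rw [hrdef]
      exact lt_min hT0 (lt_min (by linarith) (by positivity))
    have hrT : r ≤ T := min_le_left _ _
    have hr1T : r ≤ 1 - T := le_trans (min_le_right _ _) (min_le_left _ _)
    have hrC : C * r ≤ 1 := by
      have hrc : r ≤ 1 / C := le_trans (min_le_right _ _) (min_le_right _ _)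
      rw [le_div_iff₀ hC0] at hrc
      linarith [hrc]
    set t₀ : ℝ := T - r / 2 with ht₀def
    set tMax : ℝ := T + r / 2 with htMaxdef
    have ht₀0 : 0 < t₀ := by rw [ht₀def]; linarith
    have ht₀T : t₀ < T := by rw [ht₀def]; linarith
    have htMaxT : T < tMax := by rw [htMaxdef]; linarith
    have htMaxT₁ : tMax ≤ T₁ := by rw [htMaxdef, hT₁def]; linarith
    have ht₀tMax : t₀ ≤ tMax := by linarith
    -- value bound for h
    have hmono : ∀ x ∈ Ico (0:ℝ) T, x / (1 - x ^ 2) ≤ M0 := by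
      intro x hx
      have hx1 : x < 1 := lt_of_lt_of_le hx.2 hT1
      have hex : 0 < 1 - x ^ 2 := by nlinarith [hx.1]
      rw [hM0def, div_le_div_iff₀ hex hT2]
      nlinarith [hx.1, hx.2.le, mul_nonneg (sub_nonneg.2 hx.2.le) (mul_nonneg hx.1 hT0.le)]
    have hhM : ∀ x ∈ Ico (0:ℝ) T, h x ∈ Icc (-1 : ℝ) M := by
      intro x hx
      exact ⟨by linarith [hlb x hx], by
        have := le_trans (hub x hx) (hmono x hx); rw [hMdef]; linarith⟩
    set x₀ : ℝ := h t₀ with hx₀def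
    have hx₀mem : x₀ ∈ Icc (-1 : ℝ) M := hhM t₀ ⟨ht₀0.le, ht₀T⟩
    have hx₀0 : 0 ≤ x₀ := hlb t₀ ⟨ht₀0.le, ht₀T⟩
    have hx₀M0 : x₀ ≤ M0 := le_trans (hub t₀ ⟨ht₀0.le, ht₀T⟩) (hmono t₀ ⟨ht₀0.le, ht₀T⟩)
    have hball : Metric.closedBall x₀ 1 ⊆ Icc (-1 : ℝ) M := by
      rw [Real.closedBall_eq_Icc]
      exact Icc_subset_Icc (by linarith) (by rw [hMdef]; linarith)
    -- continuity of t ↦ vv c T₁ t y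
    have hptc : Continuous (pt T₁) := by
      unfold pt; exact continuous_const.max (continuous_id.min continuous_const)
    have hene : ∀ t, (1 - pt T₁ t ^ 2) ≠ 0 :=
      fun t => (lt_of_lt_of_le hd (vv_ed hT₁0.le hddef t)).ne'
    have hec : Continuous (fun t => 1 - pt T₁ t ^ 2) := continuous_const.sub (hptc.pow 2)
    have hvvcont : ∀ y : ℝ, Continuous (fun t => vv c T₁ t y) := by
      intro y
      unfold vv
      exact (((continuous_const.div hec hene).mul continuous_const).add
        (continuous_const.div (hec.pow 2) (fun t => pow_ne_zero 2 (hene t)))).add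
        continuous_const
    have hIccsub : Icc (x₀ - 1) (x₀ + 1) ⊆ Icc (-1 : ℝ) M := by
      rw [← Real.closedBall_eq_Icc]; exact hball
    -- the Picard–Lindelöf hypotheses
    have h1R : ((Real.toNNReal 1 : ℝ≥0) : ℝ) = 1 := by simp
    have hpl : IsPicardLindelof (vv c T₁) (⟨t₀, ⟨le_rfl, ht₀tMax⟩⟩ : Icc t₀ tMax) x₀
        (Real.toNNReal 1) 0 (Real.toNNReal C) (Real.toNNReal L) :=
      { lipschitzOnWith := fun t ht => by
          rw [h1R]
          exact (vv_lip hc.le hc1 hd hT₁0.le hddef hM1 t).mono hball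
        continuousOn := fun y hy => (hvvcont y).continuousOn
        norm_le := fun t ht y hy => by
          rw [h1R] at hy
          rw [Real.norm_eq_abs, Real.coe_toNNReal _ hC0.le]
          exact vv_bound hc.le hc1 hd hT₁0.le hddef hM1 t y (hball hy)
        mul_max_le := by
          have h1 : tMax - t₀ = r := by rw [htMaxdef, ht₀def]; ring
          have h2 : t₀ - t₀ = 0 := by ring
          show (Real.toNNReal C : ℝ) * max (tMax - t₀) (t₀ - t₀)
            ≤ (Real.toNNReal 1 : ℝ) - ((0 : ℝ≥0) : ℝ)
          rw [Real.coe_toNNReal _ hC0.le, h1R, NNReal.coe_zero, sub_zero, h1, h2,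
            max_eq_left hr0.le]
          exact hrC }
    obtain ⟨u, hu0', hu'⟩ := picard_sol' (vv c T₁) t₀ tMax t₀ ⟨le_rfl, ht₀tMax⟩ x₀
      C 1 L hC0.le (by norm_num) hpl
    have humem : ∀ t ∈ Icc t₀ tMax, u t ∈ Icc (-1 : ℝ) M :=
      fun t ht => hIccsub (hu' t ht).2
    -- uniqueness : u = h on [t₀, T)
    have heq : ∀ x ∈ Ico t₀ T, h x = u x := by
      intro x hx
      have hxT : x < T := hx.2
      have hsub : Icc t₀ x ⊆ Icc t₀ tMax := Icc_subset_Icc le_rfl (by linarith)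
      have key := ODE_solution_unique_of_mem_Icc_right
        (v := vv c T₁) (s := fun _ => Icc (-1:ℝ) M) (K := Real.toNNReal L)
        (f := h) (g := u) (a := t₀) (b := x)
        (fun t _ => vv_lip hc.le hc1 hd hT₁0.le hddef hM1 t)
        (fun y hy => (hode y ⟨by linarith [hy.1], lt_of_le_of_lt hy.2 hxT⟩
          ).continuousAt.continuousWithinAt)
        (fun y hy => by
          rw [vv_eq c T₁ y (by linarith [hy.1]) (by linarith [hy.2, hxT])]
          exact (hode y ⟨by linarith [hy.1], lt_trans hy.2 hxT⟩).hasDerivWithinAt)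
        (fun y hy => hhM y ⟨by linarith [hy.1], lt_trans hy.2 hxT⟩)
        (fun y hy => ((hu' y (hsub hy)).1.continuousWithinAt).mono hsub)
        (fun y hy => (hu' y (hsub ⟨hy.1, hy.2.le⟩)).1.mono_of_mem_nhdsWithin
          (Icc_mem_nhdsGE_of_mem ⟨hy.1, by linarith [hy.2]⟩))
        (fun y hy => humem y (hsub ⟨hy.1, hy.2.le⟩))
        (by rw [hu0', hx₀def])
      exact key ⟨hx.1, le_rfl⟩
    -- the glued solution
    set g : ℝ → ℝ := fun x => if x < T then h x else u x with hgdef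
    have hgh : ∀ x ∈ Ico (0:ℝ) T, g x = h x := fun x hx => if_pos hx.2
    have hg0 : g 0 = 0 := by rw [hgdef]; simp only [if_pos hT0]; exact h0
    have hgode : ∀ x ∈ Ico (0:ℝ) tMax,
        HasDerivAt g
          ((1.6 * c / (1 - x ^ 2)) * g x + 4.5 * c / (1 - x ^ 2) ^ 2 + g x ^ 2) x := by
      intro x hx
      by_cases hxT : x < T
      · have hev : ∀ᶠ y in nhds x, g y = h y := by
          filter_upwards [Iio_mem_nhds hxT] with y hy
          exact if_pos hy
        have hgx : g x = h x := if_pos hxT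
        rw [hgx]
        exact (hode x ⟨hx.1, hxT⟩).congr_of_eventuallyEq hev
      · push_neg at hxT
        have hx1 : t₀ < x := by linarith
        have hx2 : x < tMax := hx.2
        have hud : HasDerivAt u (vv c T₁ x (u x)) x :=
          ((hu' x ⟨by linarith, hx2.le⟩).1).hasDerivAt (Icc_mem_nhds hx1 hx2)
        have hev : ∀ᶠ y in nhds x, g y = u y := by
          filter_upwards [Ioo_mem_nhds hx1 hx2] with y hy
          by_cases hyT : y < T
          · rw [hgdef]; simp only [if_pos hyT]; exact heq y ⟨hy.1.le, hyT⟩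
          · rw [hgdef]; simp only [if_neg hyT]
        have hgx : g x = u x := if_neg (not_lt.2 hxT)
        rw [hgx, ← vv_eq c T₁ x (by linarith) (by linarith)]
        exact hud.congr_of_eventuallyEq hev
    have := hmax tMax g (by linarith) (by linarith) hg0 hgode hgh
    rw [htMaxdef] at this
    linarith
  exact ⟨hT, fun x hx => hub x (by rw [hT]; exact hx)⟩
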